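/- Let A be a convex subset of [0,1]². Then the set of points of [0,1]² \ A at distance at most δ from A has Lebesgue measure at most 4δ, and the set of points of A at distance at most δ from [0,1]² \ A has Lebesgue measure at most 4δ. -/

import Mathlib

open MeasureTheory

open Metric Set Measure
open scoped RealInnerProductSpace ENNReal NNReal

def unitSq : Set (EuclideanSpace ℝ (Fin 2)) := {x | ∀ i, x i ∈ Set.Icc (0 : ℝ) 1}

local notation "E2" => EuclideanSpace ℝ (Fin 2)

section Aux

lemma isClosed_box (a b : ℝ) : IsClosed {x : E2 | ∀ i, x i ∈ Icc a b} := by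
  have : {x : E2 | ∀ i, x i ∈ Icc a b} = ⋂ i : Fin 2, (fun x : E2 => x i) ⁻¹' (Icc a b) := by
    ext x; simp
  rw [this]
  exact isClosed_iInter fun i =>
    isClosed_Icc.preimage (EuclideanSpace.proj (𝕜 := ℝ) i).continuous

lemma isClosed_unitSq : IsClosed (unitSq : Set E2) := isClosed_box 0 1

lemma volume_box (a b : ℝ) : volume {x : E2 | ∀ i, x i ∈ Icc a b} = ENNReal.ofReal (b-a) ^ 2 := by
  have h : {x : E2 | ∀ i, x i ∈ Icc a b}
      = (MeasurableEquiv.toLp 2 (Fin 2 → ℝ)).symm ⁻¹' (Set.pi univ fun _ => Icc a b) := by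
    ext x
    simp only [Set.mem_preimage, Set.mem_pi, Set.mem_univ, true_implies, mem_setOf_eq]
    exact Iff.rfl
  rw [h, (EuclideanSpace.volume_preserving_symm_measurableEquiv_toLp (Fin 2)).measure_preimage
    (MeasurableSet.univ_pi fun _ => measurableSet_Icc).nullMeasurableSet,
    volume_pi_pi]
  simp [Real.volume_Icc, sq]

lemma volume_unitSq : volume (unitSq : Set E2) = 1 := by
  have h : (unitSq : Set E2) = {x : E2 | ∀ i, x i ∈ Icc (0:ℝ) 1} := rfl
  rw [h, volume_box]; norm_num

lemma volume_unitSq_ne_top : volume (unitSq : Set E2) ≠ ⊤ := by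
  rw [volume_unitSq]; exact ENNReal.one_ne_top

lemma abs_coord_le (x : E2) (i : Fin 2) : |x i| ≤ ‖x‖ := by
  rw [EuclideanSpace.norm_eq]
  rw [show |x i| = Real.sqrt (‖x i‖^2) by rw [Real.norm_eq_abs, sq_abs, Real.sqrt_sq_eq_abs]]
  apply Real.sqrt_le_sqrt
  exact Finset.single_le_sum (f := fun j => ‖x j‖^2) (fun j _ => sq_nonneg _) (Finset.mem_univ i)

lemma haus_eq_smul : ∃ c : ℝ≥0, 0 < c ∧ (μH[2] : Measure E2) = c • volume := by
  have h2 : (2 : ℝ) = (Module.finrank ℝ E2 : ℝ) := by simp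
  have hH : IsAddHaarMeasure (μH[2] : Measure E2) := by rw [h2]; infer_instance
  refine ⟨Measure.addHaarScalarFactor (μH[2] : Measure E2) volume, ?_, ?_⟩
  · exact Measure.addHaarScalarFactor_pos_of_isAddHaarMeasure _ _
  · exact Measure.isAddLeftInvariant_eq_smul _ _

/-- An expanding map does not decrease volume. -/
lemma vol_le_image {s : Set E2} {f : E2 → E2}
    (h : ∀ x ∈ s, ∀ y ∈ s, dist x y ≤ dist (f x) (f y)) :
    volume s ≤ volume (f '' s) := by
  classical
  obtain ⟨c, hc, hH⟩ := haus_eq_smul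
  set g := Function.invFunOn f s with hg
  have hgmem : ∀ y ∈ f '' s, g y ∈ s ∧ f (g y) = y := by
    rintro y ⟨x, hx, rfl⟩
    exact ⟨Function.invFunOn_mem ⟨x, hx, rfl⟩, Function.invFunOn_eq ⟨x, hx, rfl⟩⟩
  have hlip : LipschitzOnWith 1 g (f '' s) := by
    apply LipschitzOnWith.of_dist_le_mul
    intro y hy y' hy'
    obtain ⟨hgy, hfy⟩ := hgmem y hy
    obtain ⟨hgy', hfy'⟩ := hgmem y' hy'
    have := h _ hgy _ hgy'
    rw [hfy, hfy'] at this
    simpa using this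
  have hsub : s ⊆ g '' (f '' s) := by
    intro x hx
    have hmem : f x ∈ f '' s := mem_image_of_mem f hx
    obtain ⟨hgx, hfx⟩ := hgmem _ hmem
    have : dist x (g (f x)) ≤ dist (f x) (f (g (f x))) := h _ hx _ hgx
    rw [hfx, dist_self] at this
    have hxg : x = g (f x) := dist_eq_zero.mp (le_antisymm this dist_nonneg)
    exact ⟨f x, hmem, hxg.symm⟩
  have hmH : μH[2] s ≤ μH[2] (f '' s) := by
    calc μH[2] s ≤ μH[2] (g '' (f '' s)) := measure_mono hsub
      _ ≤ (1 : ℝ≥0) ^ (2:ℝ) * μH[2] (f '' s) := hlip.hausdorffMeasure_image_le (by norm_num)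
      _ = μH[2] (f '' s) := by simp
  rw [hH] at hmH
  simp only [Measure.smul_apply, smul_eq_mul] at hmH
  have hcne : (c : ℝ≥0∞) ≠ 0 := by exact_mod_cast hc.ne'
  exact (ENNReal.mul_le_mul_iff_right hcne ENNReal.coe_ne_top).mp hmH

/-- Support inequality at a nearest point of a convex set. -/
lemma support_min {C : Set E2} (hC : Convex ℝ C) {x p z : E2} (hp : p ∈ C) (hz : z ∈ C)
    (hmin : ∀ w ∈ C, dist x p ≤ dist x w) : ⟪z - p, x - p⟫ ≤ 0 := by
  by_contra hcon
  push_neg at hcon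
  set α := ⟪z - p, x - p⟫ with hα
  have hzp : z - p ≠ 0 := by
    intro h0
    have : α = 0 := by rw [hα, h0, inner_zero_left]
    linarith
  have hnzp : 0 < ‖z - p‖^2 := pow_pos (norm_pos_iff.mpr hzp) 2
  set t : ℝ := min 1 (α / ‖z - p‖^2) with ht
  have ht0 : 0 < t := lt_min one_pos (div_pos hcon hnzp)
  have ht1 : t ≤ 1 := min_le_left _ _
  have htle : t * ‖z - p‖^2 ≤ α := by
    rcases min_cases 1 (α / ‖z - p‖^2) with ⟨h1, h2⟩ | ⟨h1, h2⟩
    · rw [ht, h1, one_mul]; exact (one_le_div hnzp).mp h2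
    · rw [ht, h1, div_mul_cancel₀ _ hnzp.ne']
  have hw : p + t • (z - p) ∈ C := by
    have := hC hp hz (by linarith : (0:ℝ) ≤ 1 - t) (le_of_lt ht0) (by ring)
    convert this using 1
    module
  have hd := hmin _ hw
  rw [dist_eq_norm, dist_eq_norm] at hd
  have hsq : ‖x - (p + t • (z - p))‖^2 = ‖x - p‖^2 - 2*t*α + t^2*‖z - p‖^2 := by
    have : x - (p + t • (z - p)) = (x - p) - t • (z - p) := by abel
    rw [this, norm_sub_sq_real, real_inner_smul_right, norm_smul]
    rw [Real.norm_eq_abs, abs_of_pos ht0, mul_pow, real_inner_comm]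
    ring_nf
    rw [hα]
  nlinarith [norm_nonneg (x - p), norm_nonneg (x - (p + t • (z - p))), sq_nonneg t]

/-- Support inequality at a nearest point of the closed complement of a convex set. -/
lemma support_near {C : Set E2} (hC : Convex ℝ C) {x q z : E2} (hq : q ∈ closure Cᶜ)
    (hball : ∀ w, dist w x < dist q x → w ∈ C) (hz : z ∈ C) (hxq : x ≠ q) :
    ⟪z - q, q - x⟫ ≤ 0 := by
  by_contra hcon
  push_neg at hcon
  set α := ⟪z - q, q - x⟫ with hα
  set g := dist q x with hgdef
  have hg : 0 < g := dist_pos.mpr (fun h => hxq h.symm)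
  set t : ℝ := min (1/2) (α / (‖z - x‖^2 + 1)) with ht
  have hden : (0:ℝ) < ‖z - x‖^2 + 1 := by positivity
  have ht0 : 0 < t := lt_min (by norm_num) (div_pos hcon hden)
  have ht1 : t ≤ 1/2 := min_le_left _ _
  have htle : t * (‖z - x‖^2 + 1) ≤ α := by
    rcases min_cases (1/2 : ℝ) (α / (‖z - x‖^2 + 1)) with ⟨h1, h2⟩ | ⟨h1, h2⟩
    · rw [ht, h1]
      have := (le_div_iff₀ hden).mp h2
      linarith
    · rw [ht, h1, div_mul_cancel₀ _ hden.ne']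
  set c := x + t • (z - x) with hc
  have hqc : ‖q - c‖ < (1 - t) * g := by
    have hid : q - c = (q - x) - t • (z - x) := by rw [hc]; abel
    have hsq : ‖q - c‖^2 = g^2 - 2*t*(α + g^2) + t^2*‖z - x‖^2 := by
      rw [hid, norm_sub_sq_real, real_inner_smul_right, norm_smul]
      rw [Real.norm_eq_abs, abs_of_pos ht0, mul_pow]
      have hinner : ⟪q - x, z - x⟫ = α + g^2 := by
        have : z - x = (z - q) + (q - x) := by abel
        rw [this, inner_add_right, real_inner_self_eq_norm_sq, real_inner_comm]
        rw [hgdef, dist_eq_norm]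
      rw [hinner, hgdef, dist_eq_norm]
      ring
    have h2 : ‖q - c‖^2 < ((1-t)*g)^2 := by nlinarith [sq_nonneg g, hg]
    have h3 : (0:ℝ) < (1-t)*g := by nlinarith
    nlinarith [norm_nonneg (q - c)]
  have hballc : ∀ w, dist w c < (1 - t) * g → w ∈ C := by
    intro w hw
    have h1t : (0:ℝ) < 1 - t := by linarith
    set b := x + (1 - t)⁻¹ • (w - c) with hb
    have hbx : dist b x < g := by
      rw [hb, dist_eq_norm]
      have : x + (1 - t)⁻¹ • (w - c) - x = (1 - t)⁻¹ • (w - c) := by abel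
      rw [this, norm_smul, Real.norm_eq_abs, abs_of_pos (by positivity)]
      rw [dist_eq_norm] at hw
      calc (1 - t)⁻¹ * ‖w - c‖ < (1 - t)⁻¹ * ((1 - t) * g) := by
            apply mul_lt_mul_of_pos_left hw (by positivity)
        _ = g := by field_simp
    have hbC : b ∈ C := hball b hbx
    have : (1 - t) • b + t • z ∈ C := hC hbC hz (le_of_lt h1t) (le_of_lt ht0) (by ring)
    convert this using 1
    rw [hb, hc]
    rw [smul_add, smul_smul, mul_inv_cancel₀ h1t.ne']
    module
  have hrad : 0 < (1 - t) * g - ‖q - c‖ := by linarith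
  obtain ⟨w, hwC, hwq⟩ := Metric.mem_closure_iff.mp hq _ hrad
  have : w ∈ C := by
    apply hballc
    calc dist w c ≤ dist w q + dist q c := dist_triangle _ _ _
      _ < ((1 - t) * g - ‖q - c‖) + ‖q - c‖ := by
          have h1 : dist w q < (1 - t) * g - ‖q - c‖ := by rw [dist_comm]; exact hwq
          have h2 : dist q c = ‖q - c‖ := dist_eq_norm _ _
          linarith
      _ = (1 - t) * g := by ring
  exact hwC this

lemma expand_dist {x y v w : E2} {δ : ℝ} (hδ : 0 ≤ δ) (hkey : 0 ≤ ⟪x - y, v - w⟫) :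
    dist x y ≤ dist (x + δ • v) (y + δ • w) := by
  rw [dist_eq_norm, dist_eq_norm]
  have hid : x + δ • v - (y + δ • w) = (x - y) + δ • (v - w) := by
    rw [smul_sub]; abel
  rw [hid]
  have hsq : ‖(x - y) + δ • (v - w)‖^2
      = ‖x - y‖^2 + 2*δ*⟪x - y, v - w⟫ + δ^2*‖v - w‖^2 := by
    rw [norm_add_sq_real, real_inner_smul_right, norm_smul, Real.norm_eq_abs, abs_of_nonneg hδ,
      mul_pow]
    ring
  nlinarith [norm_nonneg ((x - y) + δ • (v - w)), norm_nonneg (x - y), sq_nonneg δ,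
    mul_nonneg (mul_nonneg (by norm_num : (0:ℝ) ≤ 2) hδ) hkey, sq_nonneg (δ * ‖v - w‖)]

/-- A unit push from a point of the shrunken square stays in the square. -/
lemma push_in_box {δ : ℝ} (hδ : 0 < δ) {x v : E2} (hv : ‖v‖ = 1)
    (hxT : ∀ i, x i ∈ Icc δ (1-δ)) : x + δ • v ∈ unitSq := by
  intro i
  have hvi : |v i| ≤ 1 := by
    calc |v i| ≤ ‖v‖ := abs_coord_le _ _
      _ = 1 := hv
  have hFi : (x + δ • v) i = x i + δ * (v i) := rfl
  have hxi := hxT i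
  rw [mem_Icc] at hxi
  rcases abs_le.mp hvi with ⟨hl, hr⟩
  constructor
  · rw [hFi]; nlinarith [hxi.1]
  · rw [hFi]; nlinarith [hxi.2]

lemma outer_key {C : Set E2} (hC : Convex ℝ C) (hcl : IsClosed C) (hne : C.Nonempty)
    {δ : ℝ} (hδ : 0 < δ) :
    volume {x ∈ unitSq | x ∉ C ∧ infDist x C ≤ δ}
      ≤ volume ((unitSq \ {x : E2 | ∀ i, x i ∈ Icc δ (1-δ)}) \ C) := by
  classical
  choose p hpC hpd using fun x : E2 => hcl.exists_infDist_eq_dist hne x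
  set u : E2 → E2 := fun x => ‖x - p x‖⁻¹ • (x - p x) with hu
  set F : E2 → E2 := fun x => x + δ • u x with hF
  set G : Set E2 := unitSq \ C with hG
  set K : Set E2 := {x : E2 | infDist x C ≤ δ} with hK
  set T : Set E2 := {x : E2 | ∀ i, x i ∈ Icc δ (1-δ)} with hT
  have hpmin : ∀ x, ∀ w ∈ C, dist x (p x) ≤ dist x w := by
    intro x w hw
    rw [← hpd x]; exact infDist_le_dist_of_mem hw
  have hsup : ∀ x, ∀ z ∈ C, ⟪z - p x, x - p x⟫ ≤ 0 := by
    intro x z hz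
    exact support_min hC (hpC x) hz (hpmin x)
  have hna : ∀ x ∉ C, 0 < ‖x - p x‖ := by
    intro x hx
    rw [norm_pos_iff, sub_ne_zero]
    intro he; exact hx (he ▸ hpC x)
  have hnu : ∀ x ∉ C, ‖u x‖ = 1 := by
    intro x hx
    rw [hu]
    simp only [norm_smul, norm_inv, norm_norm]
    exact inv_mul_cancel₀ (hna x hx).ne'
  have hmono : ∀ x ∉ C, ∀ y ∉ C, 0 ≤ ⟪x - y, u x - u y⟫ := by
    intro x hx y hy
    set a := x - p x with ha
    set b := y - p y with hb
    set na := ‖a‖ with hna'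
    set nb := ‖b‖ with hnb'
    have hnap : 0 < na := hna x hx
    have hnbp : 0 < nb := hna y hy
    have s1 : ⟪p y - p x, a⟫ ≤ 0 := hsup x _ (hpC y)
    have s2 : ⟪p x - p y, b⟫ ≤ 0 := hsup y _ (hpC x)
    have s1' : 0 ≤ ⟪p x - p y, a⟫ := by
      have : p x - p y = -(p y - p x) := by abel
      rw [this, inner_neg_left]; linarith
    have cs : ⟪a, b⟫ ≤ na * nb := real_inner_le_norm a b
    have hxy : x - y = (p x - p y) + (a - b) := by rw [ha, hb]; abel
    have huxy : u x - u y = na⁻¹ • a - nb⁻¹ • b := rfl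
    have e1 : ⟪x - y, u x - u y⟫
        = na⁻¹ * ⟪p x - p y, a⟫ + nb⁻¹ * (-⟪p x - p y, b⟫)
          + (na⁻¹ * (na * na) + nb⁻¹ * (nb * nb) - (na⁻¹ + nb⁻¹) * ⟪a, b⟫) := by
      rw [hxy, huxy]
      simp only [inner_add_left, inner_sub_left, inner_sub_right, real_inner_smul_right,
        real_inner_self_eq_norm_mul_norm, real_inner_comm b a]
      rw [← hna', ← hnb']
      ring
    have h2 : (na⁻¹ + nb⁻¹) * ⟪a, b⟫ ≤ na + nb := by
      have hmul : (na⁻¹ + nb⁻¹) * ⟪a, b⟫ ≤ (na⁻¹ + nb⁻¹) * (na * nb) :=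
        mul_le_mul_of_nonneg_left cs (by positivity)
      have heq : (na⁻¹ + nb⁻¹) * (na * nb) = na + nb := by field_simp; ring
      linarith
    have h3 : na⁻¹ * (na * na) = na := by field_simp
    have h4 : nb⁻¹ * (nb * nb) = nb := by field_simp
    have h5 : 0 ≤ na⁻¹ * ⟪p x - p y, a⟫ := mul_nonneg (by positivity) s1'
    have h6 : 0 ≤ nb⁻¹ * (-⟪p x - p y, b⟫) := mul_nonneg (by positivity) (by linarith)
    rw [e1, h3, h4]
    linarith
  have hexp : ∀ x ∈ G, ∀ y ∈ G, dist x y ≤ dist (F x) (F y) := by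
    intro x hx y hy
    exact expand_dist hδ.le (hmono x hx.2 y hy.2)
  set G1 : Set E2 := {x ∈ G | F x ∈ unitSq} with hG1
  have himg : F '' G1 ⊆ unitSq \ K := by
    rintro - ⟨x, ⟨⟨hxS, hxC⟩, hxF⟩, rfl⟩
    refine ⟨hxF, ?_⟩
    have hlow : ∀ z ∈ C, ‖x - p x‖ + δ ≤ dist (F x) z := by
      intro z hz
      have hdecomp : F x - z = (x - p x) + δ • u x + (p x - z) := by rw [hF]; dsimp only; abel
      have hinner : ⟪F x - z, u x⟫ = ‖x - p x‖ + δ + ‖x - p x‖⁻¹ * (-⟪z - p x, x - p x⟫) := by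
        rw [hdecomp]
        simp only [inner_add_left, real_inner_smul_left, real_inner_smul_right, hu,
          real_inner_self_eq_norm_mul_norm]
        have hzp : ⟪p x - z, x - p x⟫ = -⟪z - p x, x - p x⟫ := by
          have : p x - z = -(z - p x) := by abel
          rw [this, inner_neg_left]
        rw [hzp]
        field_simp [(hna x hxC).ne']
      have hle : ⟪F x - z, u x⟫ ≤ ‖F x - z‖ := by
        calc ⟪F x - z, u x⟫ ≤ ‖F x - z‖ * ‖u x‖ := real_inner_le_norm _ _
          _ = ‖F x - z‖ := by rw [hnu x hxC, mul_one]
      have h5 : 0 ≤ ‖x - p x‖⁻¹ * (-⟪z - p x, x - p x⟫) :=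
        mul_nonneg (inv_nonneg.mpr (norm_nonneg _)) (by linarith [hsup x z hz])
      rw [dist_eq_norm]
      linarith [hinner, hle]
    have hKlt : δ < infDist (F x) C := by
      have h1 : infDist (F x) C = dist (F x) (p (F x)) := hpd (F x)
      have h2 := hlow (p (F x)) (hpC (F x))
      linarith [hna x hxC]
    simp only [hK, mem_setOf_eq, not_le]
    exact hKlt
  have hvolG1 : volume G1 ≤ volume (unitSq \ K) :=
    le_trans (vol_le_image (fun x hx y hy => hexp x hx.1 y hy.1)) (measure_mono himg)
  have hG2 : G \ G1 ⊆ (unitSq \ T) \ C := by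
    rintro x ⟨⟨hxS, hxC⟩, hxn⟩
    have hFx : F x ∉ unitSq := by
      intro hF'; exact hxn ⟨⟨hxS, hxC⟩, hF'⟩
    refine ⟨⟨hxS, ?_⟩, hxC⟩
    intro hxT
    exact hFx (push_in_box hδ (hnu x hxC) hxT)
  have hKmeas : MeasurableSet K := by
    have : IsClosed K := IsClosed.preimage (continuous_infDist_pt C) isClosed_Iic
    exact this.measurableSet
  have hSK : unitSq \ K = G \ K := by
    ext x
    constructor
    · rintro ⟨hxS, hxK⟩
      have hxC : x ∉ C := by
        intro hxC
        exact hxK (by simp only [hK, mem_setOf_eq, infDist_zero_of_mem hxC]; exact hδ.le)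
      exact ⟨⟨hxS, hxC⟩, hxK⟩
    · rintro ⟨⟨hxS, _⟩, hxK⟩; exact ⟨hxS, hxK⟩
  have hsplit : volume (G ∩ K) + volume (G \ K) = volume G := measure_inter_add_diff G hKmeas
  have hcover : volume G ≤ volume G1 + volume (G \ G1) := by
    have hsub : G ⊆ G1 ∪ (G \ G1) := by
      intro x hx
      by_cases hx1 : x ∈ G1
      · exact Or.inl hx1
      · exact Or.inr ⟨hx, hx1⟩
    exact le_trans (measure_mono hsub) (measure_union_le _ _)
  have hfin : volume (G \ K) ≠ ⊤ := by
    have : volume (G \ K) ≤ volume (unitSq : Set E2) :=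
      measure_mono (fun x hx => hx.1.1)
    exact ne_top_of_le_ne_top volume_unitSq_ne_top this
  have hmain : volume (G ∩ K) + volume (G \ K)
      ≤ volume ((unitSq \ T) \ C) + volume (G \ K) := by
    rw [hsplit]
    calc volume G ≤ volume G1 + volume (G \ G1) := hcover
      _ ≤ volume (unitSq \ K) + volume ((unitSq \ T) \ C) := by
          exact add_le_add hvolG1 (measure_mono hG2)
      _ = volume ((unitSq \ T) \ C) + volume (G \ K) := by rw [hSK, add_comm]
  have hfinal : volume (G ∩ K) ≤ volume ((unitSq \ T) \ C) :=
    ENNReal.le_of_add_le_add_right hfin hmain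
  have hset : {x ∈ unitSq | x ∉ C ∧ infDist x C ≤ δ} = G ∩ K := by
    ext x; constructor
    · rintro ⟨hxS, hxC, hxK⟩; exact ⟨⟨hxS, hxC⟩, hxK⟩
    · rintro ⟨⟨hxS, hxC⟩, hxK⟩; exact ⟨hxS, hxC, hxK⟩
  rw [hset]
  exact hfinal

lemma inner_key {A : Set E2} (hA : Convex ℝ A) (hAne : A.Nonempty) (hAS : A ⊆ unitSq)
    {δ : ℝ} (hδ : 0 < δ) :
    volume {x ∈ interior A | infDist x (closure Aᶜ) < δ}
      ≤ volume (unitSq \ {x : E2 | ∀ i, x i ∈ Icc δ (1-δ)}) := by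
  classical
  set W : Set E2 := closure Aᶜ with hW
  set T : Set E2 := {x : E2 | ∀ i, x i ∈ Icc δ (1-δ)} with hT
  set C : Set E2 := closure A with hC
  have hCconv : Convex ℝ C := hA.closure
  have hCcl : IsClosed C := isClosed_closure
  have hCne : C.Nonempty := hAne.closure
  have hWne : W.Nonempty := by
    set z : E2 := (WithLp.equiv 2 (Fin 2 → ℝ)).symm (fun _ => 2) with hz
    have hz0 : z 0 = 2 := rfl
    have hzA : z ∈ Aᶜ := by
      intro hzA
      have := (hAS hzA) 0
      rw [hz0] at this
      exact absurd this.2 (by norm_num)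
    exact ⟨z, subset_closure hzA⟩
  choose q hqW hqd using fun x : E2 => isClosed_closure.exists_infDist_eq_dist hWne x
  have hint_ball : ∀ x ∈ interior A, ∀ w, dist w x < dist x (q x) → w ∈ A := by
    intro x hx w hw
    by_contra hwA
    have hwW : w ∈ W := subset_closure hwA
    have : infDist x W ≤ dist x w := infDist_le_dist_of_mem hwW
    rw [hqd x] at this
    rw [dist_comm] at hw
    linarith
  have hgpos : ∀ x ∈ interior A, 0 < dist x (q x) := by
    intro x hx
    rcases Metric.isOpen_iff.mp isOpen_interior x hx with ⟨r, hr, hball⟩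
    rw [dist_pos]
    intro he
    have hxW : x ∈ W := he ▸ hqW x
    obtain ⟨b, hbA, hbd⟩ := Metric.mem_closure_iff.mp hxW r hr
    have : b ∈ interior A := hball (by rw [Metric.mem_ball, dist_comm]; exact hbd)
    exact hbA (interior_subset this)
  have hxq : ∀ x ∈ interior A, x ≠ q x := by
    intro x hx he
    have := hgpos x hx
    rw [← he] at this
    simp at this
  have hsupq : ∀ x ∈ interior A, ∀ z ∈ C, ⟪z - q x, q x - x⟫ ≤ 0 := by
    intro x hx
    have hA' : ∀ z ∈ A, ⟪z - q x, q x - x⟫ ≤ 0 := by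
      intro z hz
      apply support_near hA (hqW x) _ hz (hxq x hx)
      intro w hw
      apply hint_ball x hx
      rwa [dist_comm x (q x)]
    have hcls : IsClosed {z : E2 | ⟪z - q x, q x - x⟫ ≤ 0} := by
      apply isClosed_le _ continuous_const
      exact Continuous.inner (continuous_id.sub continuous_const) continuous_const
    exact closure_minimal hA' hcls
  have hcball : ∀ x ∈ interior A, ∀ v : E2, ‖v‖ ≤ dist x (q x) → x + v ∈ C := by
    intro x hx v hv
    have h1 : x + v ∈ closedBall x (dist x (q x)) := by
      rw [mem_closedBall, dist_eq_norm]
      simpa using hv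
    rw [← closure_ball x (hgpos x hx).ne'] at h1
    have h2 : closure (ball x (dist x (q x))) ⊆ closure A :=
      closure_mono (fun w hw => hint_ball x hx w (Metric.mem_ball.mp hw))
    exact h2 h1
  set u : E2 → E2 := fun x => (dist x (q x))⁻¹ • (q x - x) with hu
  set Fi : E2 → E2 := fun x => x + δ • u x with hFi
  have hnq : ∀ x ∈ interior A, ‖q x - x‖ = dist x (q x) := by
    intro x _; rw [dist_eq_norm, norm_sub_rev]
  have hnu : ∀ x ∈ interior A, ‖u x‖ = 1 := by
    intro x hx
    rw [hu]
    simp only [norm_smul, norm_inv, Real.norm_eq_abs, abs_of_pos (hgpos x hx)]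
    rw [hnq x hx]
    exact inv_mul_cancel₀ (hgpos x hx).ne'
  have hmono : ∀ x ∈ interior A, ∀ y ∈ interior A, 0 ≤ ⟪x - y, u x - u y⟫ := by
    intro x hx y hy
    set a := q x - x with ha
    set b := q y - y with hb
    set na := dist x (q x) with hna
    set nb := dist y (q y) with hnb
    have hnap : 0 < na := hgpos x hx
    have hnbp : 0 < nb := hgpos y hy
    have hnaa : ‖a‖ = na := hnq x hx
    have hnbb : ‖b‖ = nb := hnq y hy
    have hz1 : y + nb • u x ∈ C := by
      apply hcball y hy
      rw [norm_smul, Real.norm_eq_abs, abs_of_pos hnbp, hnu x hx, mul_one]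
    have s1 : ⟪(y + nb • u x) - q x, a⟫ ≤ 0 := hsupq x hx _ hz1
    have hz2 : x + na • u y ∈ C := by
      apply hcball x hx
      rw [norm_smul, Real.norm_eq_abs, abs_of_pos hnap, hnu y hy, mul_one]
    have s2 : ⟪(x + na • u y) - q y, b⟫ ≤ 0 := hsupq y hy _ hz2
    have E1 : ⟪(y + nb • u x) - q x, a⟫ = ⟪y - x, a⟫ + nb * na - na * na := by
      have hd : (y + nb • u x) - q x = (y - x) + (nb * na⁻¹) • a - a := by
        rw [hu, ha, smul_smul]
        rw [← hna]
        abel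
      rw [hd, inner_sub_left, inner_add_left, real_inner_smul_left,
        real_inner_self_eq_norm_mul_norm, hnaa]
      field_simp
    have E2' : ⟪(x + na • u y) - q y, b⟫ = ⟪x - y, b⟫ + na * nb - nb * nb := by
      have hd : (x + na • u y) - q y = (x - y) + (na * nb⁻¹) • b - b := by
        rw [hu, hb, smul_smul]
        rw [← hnb]
        abel
      rw [hd, inner_sub_left, inner_add_left, real_inner_smul_left,
        real_inner_self_eq_norm_mul_norm, hnbb]
      field_simp
    have L1 : ⟪y - x, a⟫ ≤ na * na - nb * na := by rw [E1] at s1; linarith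
    have L2 : ⟪x - y, b⟫ ≤ nb * nb - na * nb := by rw [E2'] at s2; linarith
    have e1 : ⟪x - y, u x - u y⟫ = na⁻¹ * (-⟪y - x, a⟫) + nb⁻¹ * (-⟪x - y, b⟫) := by
      have hux : u x = na⁻¹ • a := by rw [hu]
      have huy : u y = nb⁻¹ • b := by rw [hu]
      rw [hux, huy, inner_sub_right, real_inner_smul_right, real_inner_smul_right]
      have h1 : ⟪x - y, a⟫ = -⟪y - x, a⟫ := by
        have : x - y = -(y - x) := by abel
        rw [this, inner_neg_left]
      rw [h1]
      ring
    have B1 : na⁻¹ * (-⟪y - x, a⟫) ≥ nb - na := by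
      have h1 : na⁻¹ * (nb * na - na * na) ≤ na⁻¹ * (-⟪y - x, a⟫) :=
        mul_le_mul_of_nonneg_left (by linarith) (inv_nonneg.mpr hnap.le)
      have h2 : na⁻¹ * (nb * na - na * na) = nb - na := by field_simp
      linarith
    have B2 : nb⁻¹ * (-⟪x - y, b⟫) ≥ na - nb := by
      have h1 : nb⁻¹ * (na * nb - nb * nb) ≤ nb⁻¹ * (-⟪x - y, b⟫) :=
        mul_le_mul_of_nonneg_left (by linarith) (inv_nonneg.mpr hnbp.le)
      have h2 : nb⁻¹ * (na * nb - nb * nb) = na - nb := by field_simp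
      linarith
    rw [e1]
    linarith
  set I : Set E2 := {x ∈ interior A | infDist x W < δ} with hI
  set I1 : Set E2 := {x ∈ I | Fi x ∈ unitSq} with hI1
  have hexp : ∀ x ∈ I1, ∀ y ∈ I1, dist x y ≤ dist (Fi x) (Fi y) := by
    intro x hx y hy
    exact expand_dist hδ.le (hmono x hx.1.1 y hy.1.1)
  have himg : Fi '' I1 ⊆ {x ∈ unitSq | x ∉ C ∧ infDist x C ≤ δ} := by
    rintro - ⟨x, ⟨⟨hxint, hxd⟩, hxFS⟩, rfl⟩
    have hnalt : dist x (q x) < δ := by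
      rw [← hqd x]; exact hxd
    refine ⟨hxFS, ?_, ?_⟩
    · intro hFC
      have hs := hsupq x hxint _ hFC
      set na := dist x (q x) with hna
      have hux : u x = na⁻¹ • (q x - x) := by rw [hu]
      have hd : Fi x - q x = (δ * na⁻¹) • (q x - x) - (q x - x) := by
        have hFix : Fi x = x + δ • u x := by rw [hFi]
        rw [hFix, hux, smul_smul]
        abel
      rw [hd, inner_sub_left, real_inner_smul_left, real_inner_self_eq_norm_mul_norm,
        hnq x hxint] at hs
      have hnap : 0 < na := hgpos x hxint
      have hs2 : δ * na - na * na ≤ 0 := by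
        have hcalc : δ * na⁻¹ * (na * na) = δ * na := by field_simp
        linarith [hcalc ▸ hs]
      nlinarith
    · have h1 : infDist (Fi x) C ≤ dist (Fi x) x :=
        infDist_le_dist_of_mem (subset_closure (interior_subset hxint))
      have h2 : dist (Fi x) x = δ := by
        rw [hFi]
        dsimp only
        rw [dist_eq_norm]
        have : x + δ • u x - x = δ • u x := by abel
        rw [this, norm_smul, Real.norm_eq_abs, abs_of_pos hδ, hnu x hxint, mul_one]
      linarith
  have hvolI1 : volume I1 ≤ volume {x ∈ unitSq | x ∉ C ∧ infDist x C ≤ δ} :=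
    le_trans (vol_le_image hexp) (measure_mono himg)
  have houter := outer_key hCconv hCcl hCne hδ
  have hI2 : I \ I1 ⊆ (unitSq \ T) ∩ C := by
    rintro x ⟨hxI, hxn⟩
    have hxint := hxI.1
    have hFx : Fi x ∉ unitSq := fun hF' => hxn ⟨hxI, hF'⟩
    have hxC : x ∈ C := subset_closure (interior_subset hxint)
    refine ⟨⟨hAS (interior_subset hxint), ?_⟩, hxC⟩
    intro hxT
    exact hFx (push_in_box hδ (hnu x hxint) hxT)
  have hcover : volume I ≤ volume I1 + volume (I \ I1) := by
    have hsub : I ⊆ I1 ∪ (I \ I1) := by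
      intro x hx
      by_cases hx1 : x ∈ I1
      · exact Or.inl hx1
      · exact Or.inr ⟨hx, hx1⟩
    exact le_trans (measure_mono hsub) (measure_union_le _ _)
  have hsum : volume ((unitSq \ T) \ C) + volume ((unitSq \ T) ∩ C) = volume (unitSq \ T) :=
    measure_diff_add_inter _ hCcl.measurableSet
  calc volume I ≤ volume I1 + volume (I \ I1) := hcover
    _ ≤ volume ((unitSq \ T) \ C) + volume ((unitSq \ T) ∩ C) :=
        add_le_add (hvolI1.trans houter) (measure_mono hI2)
    _ = volume (unitSq \ T) := hsum

lemma collar_bound {δ : ℝ} (hδ : 0 < δ) :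
    volume ((unitSq : Set E2) \ {x : E2 | ∀ i, x i ∈ Icc δ (1-δ)}) ≤ ENNReal.ofReal (4*δ) := by
  set T : Set E2 := {x : E2 | ∀ i, x i ∈ Icc δ (1-δ)} with hT
  by_cases hbig : 1 ≤ 4*δ
  · calc volume ((unitSq : Set E2) \ T) ≤ volume (unitSq : Set E2) := measure_mono diff_subset
      _ = 1 := volume_unitSq
      _ ≤ ENNReal.ofReal (4*δ) := by
          rw [show (1 : ℝ≥0∞) = ENNReal.ofReal 1 by simp]
          exact ENNReal.ofReal_le_ofReal hbig
  · push_neg at hbig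
    have hδ2 : δ < 1/2 := by linarith
    have hTsub : T ⊆ unitSq := by
      intro x hx i
      have := hx i
      rw [mem_Icc] at this ⊢
      constructor <;> [linarith [this.1]; linarith [this.2]]
    have hTvol : volume T = ENNReal.ofReal ((1-2*δ)^2) := by
      have h1 : volume T = ENNReal.ofReal ((1-δ)-δ) ^ 2 := volume_box δ (1-δ)
      rw [h1, ← ENNReal.ofReal_pow (by linarith)]
      ring_nf
    have hsum : volume ((unitSq : Set E2) \ T) + volume ((unitSq : Set E2) ∩ T)
        = volume (unitSq : Set E2) := measure_diff_add_inter _ (isClosed_box δ (1-δ)).measurableSet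
    have hcap : (unitSq : Set E2) ∩ T = T := inter_eq_self_of_subset_right hTsub
    rw [hcap, volume_unitSq] at hsum
    have hineq : (1 : ℝ≥0∞) ≤ ENNReal.ofReal (4*δ) + volume T := by
      rw [hTvol, ← ENNReal.ofReal_add (by linarith) (by positivity)]
      rw [show (1 : ℝ≥0∞) = ENNReal.ofReal 1 by simp]
      apply ENNReal.ofReal_le_ofReal
      nlinarith
    have hfin : volume T ≠ ⊤ := by rw [hTvol]; exact ENNReal.ofReal_ne_top
    apply ENNReal.le_of_add_le_add_right hfin
    rw [hsum]
    exact hineq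

lemma Dset_convex {A : Set E2} (hA : Convex ℝ A) (hWne : (closure Aᶜ).Nonempty) {δ : ℝ}
    (hδ : 0 < δ) : Convex ℝ {x : E2 | δ ≤ infDist x (closure Aᶜ)} := by
  have hchar : ∀ x : E2, δ ≤ infDist x (closure Aᶜ) ↔ ∀ v : E2, ‖v‖ < δ → x + v ∈ A := by
    intro x
    constructor
    · intro hx v hv
      by_contra hvA
      have : infDist x (closure Aᶜ) ≤ dist x (x + v) :=
        infDist_le_dist_of_mem (subset_closure hvA)
      rw [dist_eq_norm] at this
      have h2 : x - (x + v) = -v := by abel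
      rw [h2, norm_neg] at this
      linarith
    · intro hx
      by_contra hlt
      push_neg at hlt
      obtain ⟨w, hwW, hwd⟩ := (infDist_lt_iff hWne).mp hlt
      obtain ⟨w', hw'A, hw'd⟩ := Metric.mem_closure_iff.mp hwW (δ - dist x w) (by linarith)
      have hvd : ‖w' - x‖ < δ := by
        rw [← dist_eq_norm, dist_comm]
        calc dist x w' ≤ dist x w + dist w w' := dist_triangle _ _ _
          _ < δ := by linarith
      have hmem := hx (w' - x) hvd
      have h3 : x + (w' - x) = w' := by abel
      rw [h3] at hmem
      exact hw'A hmem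
  intro x hx y hy s t hs ht hst
  rw [mem_setOf_eq, hchar]
  intro v hv
  have hxv : x + v ∈ A := (hchar x).mp hx v hv
  have hyv : y + v ∈ A := (hchar y).mp hy v hv
  have hmem := hA hxv hyv hs ht hst
  have hid : s • (x + v) + t • (y + v) = s • x + t • y + (s + t) • v := by module
  rw [hst, one_smul] at hid
  rwa [hid] at hmem

lemma level_subset_frontier {W : Set E2} (hWcl : IsClosed W) (hWne : W.Nonempty) {δ : ℝ}
    (hδ : 0 < δ) :
    {x : E2 | infDist x W = δ} ⊆ frontier {x : E2 | δ ≤ infDist x W} := by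
  intro x hx
  have hxd : infDist x W = δ := hx
  have hDcl : IsClosed {x : E2 | δ ≤ infDist x W} :=
    isClosed_le continuous_const (continuous_infDist_pt W)
  rw [hDcl.frontier_eq]
  refine ⟨le_of_eq hxd.symm, ?_⟩
  intro hint
  obtain ⟨r, hr, hball⟩ := Metric.isOpen_iff.mp isOpen_interior x hint
  obtain ⟨qx, hqW, hqd⟩ := hWcl.exists_infDist_eq_dist hWne x
  have hg : dist x qx = δ := by rw [← hqd]; exact hxd
  set t := min (r/2) (δ/2) with htd
  have ht0 : 0 < t := lt_min (by linarith) (by linarith)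
  have htr : t < r := lt_of_le_of_lt (min_le_left _ _) (by linarith)
  have htδ : t ≤ δ/2 := min_le_right _ _
  set x' := x + (t / δ) • (qx - x) with hx'
  have hx'q : dist x' qx = δ - t := by
    have hid : x' - qx = (1 - t/δ) • (x - qx) := by
      rw [hx']
      have h1 : (t/δ) • (qx - x) = (t/δ) • qx - (t/δ) • x := smul_sub _ _ _
      have h2 : (1 - t/δ) • (x - qx) = (1 - t/δ) • x - (1 - t/δ) • qx := smul_sub _ _ _
      rw [h1, h2, sub_smul, sub_smul, one_smul, one_smul]
      abel
    have hpos : (0:ℝ) < 1 - t/δ := by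
      rw [sub_pos, div_lt_one hδ]; linarith
    rw [dist_eq_norm, hid, norm_smul, Real.norm_eq_abs, abs_of_pos hpos]
    rw [← dist_eq_norm, hg]
    field_simp
  have hx'x : dist x' x = t := by
    have hid : x' - x = (t / δ) • (qx - x) := by rw [hx']; abel
    rw [dist_eq_norm, hid, norm_smul, Real.norm_eq_abs, abs_of_pos (by positivity)]
    rw [norm_sub_rev, ← dist_eq_norm, hg]
    field_simp
  have hx'D : x' ∈ interior {x : E2 | δ ≤ infDist x W} := by
    apply hball
    rw [Metric.mem_ball, hx'x]
    exact htr
  have hx'D' : δ ≤ infDist x' W :=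
    (interior_subset hx'D : x' ∈ {x : E2 | δ ≤ infDist x W})
  have : infDist x' W ≤ δ - t := by
    rw [← hx'q]
    exact infDist_le_dist_of_mem hqW
  linarith

lemma compl_closure_nonempty {A : Set E2} (hAS : A ⊆ unitSq) : (closure Aᶜ).Nonempty := by
  set z : E2 := (WithLp.equiv 2 (Fin 2 → ℝ)).symm (fun _ => 2) with hz
  have hz0 : z 0 = 2 := rfl
  have hzA : z ∈ Aᶜ := by
    intro hzA
    have := (hAS hzA) 0
    rw [hz0] at this
    exact absurd this.2 (by norm_num)
  exact ⟨z, subset_closure hzA⟩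

end Aux

/-- For a convex subset `A` of the unit square, the `δ`-neighbourhood of its boundary
has measure at most `4δ` on each side. -/
theorem convex_boundary_neighbourhood (A : Set (EuclideanSpace ℝ (Fin 2)))
    (hA : Convex ℝ A) (hsub : A ⊆ unitSq) (δ : ℝ) (hδ : 0 < δ) :
    volume {x ∈ unitSq \ A | ∃ y ∈ A, dist x y ≤ δ} ≤ ENNReal.ofReal (4 * δ) ∧
    volume {x ∈ A | ∃ y ∈ unitSq \ A, dist x y ≤ δ} ≤ ENNReal.ofReal (4 * δ) := by
  constructor
  · -- outer neighbourhood
    rcases A.eq_empty_or_nonempty with hAe | hAne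
    · have hset : {x ∈ unitSq \ A | ∃ y ∈ A, dist x y ≤ δ} = (∅ : Set E2) := by
        ext x; simp [hAe]
      rw [hset]; simp
    · set C : Set E2 := closure A with hC
      have hCconv : Convex ℝ C := hA.closure
      have hCcl : IsClosed C := isClosed_closure
      have hCne : C.Nonempty := hAne.closure
      have hsub1 : {x ∈ unitSq \ A | ∃ y ∈ A, dist x y ≤ δ}
          ⊆ (C \ A) ∪ {x ∈ unitSq | x ∉ C ∧ infDist x C ≤ δ} := by
        rintro x ⟨⟨hxS, hxA⟩, y, hyA, hxy⟩
        by_cases hxC : x ∈ C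
        · exact Or.inl ⟨hxC, hxA⟩
        · exact Or.inr ⟨hxS, hxC, le_trans (infDist_le_dist_of_mem (subset_closure hyA)) hxy⟩
      have hfr : volume (C \ A) = 0 := by
        have hfr0 : volume (frontier A) = 0 := hA.addHaar_frontier volume
        rw [← closure_diff_interior] at hfr0
        exact measure_mono_null
          (show C \ A ⊆ closure A \ interior A from
            fun x hx => ⟨hx.1, fun hint => hx.2 (interior_subset hint)⟩) hfr0
      calc volume {x ∈ unitSq \ A | ∃ y ∈ A, dist x y ≤ δ}
          ≤ volume (C \ A) + volume {x ∈ unitSq | x ∉ C ∧ infDist x C ≤ δ} :=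
            le_trans (measure_mono hsub1) (measure_union_le _ _)
        _ ≤ 0 + volume ((unitSq \ {x : E2 | ∀ i, x i ∈ Icc δ (1-δ)}) \ C) :=
            add_le_add hfr.le (outer_key hCconv hCcl hCne hδ)
        _ ≤ volume (unitSq \ {x : E2 | ∀ i, x i ∈ Icc δ (1-δ)}) := by
            rw [zero_add]; exact measure_mono diff_subset
        _ ≤ ENNReal.ofReal (4 * δ) := collar_bound hδ
  · -- inner neighbourhood
    rcases A.eq_empty_or_nonempty with hAe | hAne
    · have hset : {x ∈ A | ∃ y ∈ unitSq \ A, dist x y ≤ δ} = (∅ : Set E2) := by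
        ext x; simp [hAe]
      rw [hset]; simp
    · set W : Set E2 := closure Aᶜ with hW
      have hWne : W.Nonempty := compl_closure_nonempty hsub
      have hsub2 : {x ∈ A | ∃ y ∈ unitSq \ A, dist x y ≤ δ}
          ⊆ (closure A \ interior A)
            ∪ ({x : E2 | infDist x W = δ} ∪ {x ∈ interior A | infDist x W < δ}) := by
        rintro x ⟨hxA, y, ⟨hyS, hyA⟩, hxy⟩
        by_cases hxint : x ∈ interior A
        · have hd : infDist x W ≤ δ :=
            le_trans (infDist_le_dist_of_mem (subset_closure hyA)) hxy
          rcases lt_or_eq_of_le hd with hlt | heq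
          · exact Or.inr (Or.inr ⟨hxint, hlt⟩)
          · exact Or.inr (Or.inl heq)
        · exact Or.inl ⟨subset_closure hxA, hxint⟩
      have hfr : volume (closure A \ interior A) = 0 := by
        have hfr0 : volume (frontier A) = 0 := hA.addHaar_frontier volume
        rw [← closure_diff_interior] at hfr0
        exact hfr0
      have hlev : volume {x : E2 | infDist x W = δ} = 0 := by
        have hDconv : Convex ℝ {x : E2 | δ ≤ infDist x W} := Dset_convex hA hWne hδ
        have hDfr : volume (frontier {x : E2 | δ ≤ infDist x W}) = 0 :=
          hDconv.addHaar_frontier volume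
        exact measure_mono_null (level_subset_frontier isClosed_closure hWne hδ) hDfr
      have hinner := inner_key hA hAne hsub hδ
      calc volume {x ∈ A | ∃ y ∈ unitSq \ A, dist x y ≤ δ}
          ≤ volume (closure A \ interior A)
            + volume ({x : E2 | infDist x W = δ} ∪ {x ∈ interior A | infDist x W < δ}) :=
            le_trans (measure_mono hsub2) (measure_union_le _ _)
        _ ≤ 0 + (volume {x : E2 | infDist x W = δ}
            + volume {x ∈ interior A | infDist x W < δ}) :=
            add_le_add hfr.le (measure_union_le _ _)
        _ ≤ 0 + (0 + volume (unitSq \ {x : E2 | ∀ i, x i ∈ Icc δ (1-δ)})) := by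
            exact add_le_add le_rfl (add_le_add hlev.le hinner)
        _ ≤ ENNReal.ofReal (4 * δ) := by
            rw [zero_add, zero_add]; exact collar_bound hδ
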